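/- Let w:[0,1]→(0,∞) be continuous, let a₀, a₁ ∈ ℝᵈ be unit vectors with ⟨a₀, a₁⟩ > −1, and set ω = arccos⟨a₀, a₁⟩ and c = ∫₀¹ w(t)⁻¹ dt. Then the infimum of ∫₀¹ |α'(t)|² w(t) dt over all C¹ curves α:[0,1]→ℝᵈ with |α(t)| = 1 for all t, α(0) = a₀ and α(1) = a₁, equals ω²/c, and it is attained by α = α̃∘λ, where α̃(t) = (sin((1−t)ω)/sin ω)·a₀ + (sin(tω)/sin ω)·a₁ (interpreted as the constant curve a₀ when ω = 0) and λ(t) = (1/c)∫₀ᵗ w(r)⁻¹ dr. -/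

import Mathlib

open MeasureTheory Set
open scoped RealInnerProductSpace

lemma trig1 (x y : ℝ) : Real.sin x ^2 + 2*(Real.sin x)*(Real.sin y)*(Real.cos (x+y)) + Real.sin y^2 = Real.sin (x+y)^2 := by
  rw [Real.sin_add, Real.cos_add]
  nlinarith [Real.sin_sq_add_cos_sq x, Real.sin_sq_add_cos_sq y]

lemma trig2 (x y : ℝ) : Real.cos x ^2 - 2*(Real.cos x)*(Real.cos y)*(Real.cos (x+y)) + Real.cos y^2 = Real.sin (x+y)^2 := by
  rw [Real.sin_add, Real.cos_add]
  nlinarith [Real.sin_sq_add_cos_sq x, Real.sin_sq_add_cos_sq y]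

lemma norm_comb {d : ℕ} (a0 a1 : EuclideanSpace ℝ (Fin d)) (h0 : ‖a0‖ = 1) (h1 : ‖a1‖ = 1)
    (p q : ℝ) : ‖p • a0 + q • a1‖^2 = p^2 + 2*p*q*⟪a0, a1⟫ + q^2 := by
  rw [norm_add_sq_real, norm_smul, norm_smul, real_inner_smul_left, real_inner_smul_right]
  simp [h0, h1, mul_pow]
  ring

lemma norm_eq_of_sq {d : ℕ} (v : EuclideanSpace ℝ (Fin d)) (r : ℝ) (hr : 0 ≤ r)
    (h : ‖v‖^2 = r^2) : ‖v‖ = r := by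
  nlinarith [norm_nonneg v, sq_nonneg (‖v‖ - r), sq_nonneg (‖v‖ + r)]

lemma div_comb (a b co sω : ℝ) (h : sω ≠ 0) (hid : a^2 + 2*a*b*co + b^2 = sω^2) :
    (a/sω)^2 + 2*(a/sω)*(b/sω)*co + (b/sω)^2 = 1^2 := by
  field_simp
  linear_combination hid

lemma div_comb2 (a b co sω ω : ℝ) (h : sω ≠ 0) (hid : a^2 - 2*a*b*co + b^2 = sω^2) :
    (a*(-1*ω)/sω)^2 + 2*(a*(-1*ω)/sω)*(b*ω/sω)*co + (b*ω/sω)^2 = ω^2 := by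
  field_simp
  linear_combination ω^2 * hid

/-- Let `w : [0,1] → (0,∞)` be continuous, `a₀, a₁ ∈ ℝᵈ` unit vectors with
`⟨a₀,a₁⟩ > −1`, `ω = arccos⟨a₀,a₁⟩`, `c = ∫₀¹ w(t)⁻¹ dt`. Then the infimum of
`∫₀¹ |α'(t)|² w(t) dt` over all `C¹` unit-sphere-valued curves from `a₀` to `a₁` equals `ω²/c`,
attained by `α = α̃ ∘ λ` where `α̃` is the great-circle arc (constant `a₀` if `ω = 0`) and
`λ(t) = (1/c)∫₀ᵗ w(r)⁻¹ dr`. -/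
theorem stmt3 (d : ℕ) (w : ℝ → ℝ)
    (hw : ContinuousOn w (Set.Icc 0 1))
    (hwpos : ∀ t ∈ Set.Icc (0:ℝ) 1, 0 < w t)
    (a0 a1 : EuclideanSpace ℝ (Fin d)) (h0 : ‖a0‖ = 1) (h1 : ‖a1‖ = 1)
    (hgt : (-1 : ℝ) < ⟪a0, a1⟫)
    (ω c : ℝ) (hω : ω = Real.arccos ⟪a0, a1⟫)
    (hc : c = ∫ t in (0:ℝ)..1, (w t)⁻¹)
    (A : ℝ → EuclideanSpace ℝ (Fin d))
    (hA : ∀ t, A t = if ω = 0 then a0 else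
        (Real.sin ((1 - t) * ω) / Real.sin ω) • a0 + (Real.sin (t * ω) / Real.sin ω) • a1)
    (l : ℝ → ℝ) (hl : ∀ t, l t = (∫ r in (0:ℝ)..t, (w r)⁻¹) / c) :
    (∀ α α' : ℝ → EuclideanSpace ℝ (Fin d),
        (∀ t ∈ Set.Icc (0:ℝ) 1, HasDerivWithinAt α (α' t) (Set.Icc 0 1) t) →
        ContinuousOn α' (Set.Icc 0 1) →
        (∀ t ∈ Set.Icc (0:ℝ) 1, ‖α t‖ = 1) → α 0 = a0 → α 1 = a1 →
        ω ^ 2 / c ≤ ∫ t in (0:ℝ)..1, ‖α' t‖ ^ 2 * w t) ∧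
    (∃ α' : ℝ → EuclideanSpace ℝ (Fin d),
        (∀ t ∈ Set.Icc (0:ℝ) 1, HasDerivWithinAt (fun u => A (l u)) (α' t) (Set.Icc 0 1) t) ∧
        ContinuousOn α' (Set.Icc 0 1) ∧
        (∀ t ∈ Set.Icc (0:ℝ) 1, ‖A (l t)‖ = 1) ∧ A (l 0) = a0 ∧ A (l 1) = a1 ∧
        (∫ t in (0:ℝ)..1, ‖α' t‖ ^ 2 * w t) = ω ^ 2 / c) := by
  have huIcc : uIcc (0:ℝ) 1 = Icc 0 1 := uIcc_of_le zero_le_one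
  have hq1 : ⟪a0, a1⟫ ≤ 1 := by
    have := real_inner_le_norm a0 a1
    rwa [h0, h1, one_mul] at this
  have hwinv : ContinuousOn (fun t => (w t)⁻¹) (Icc (0:ℝ) 1) :=
    hw.inv₀ (fun t ht => (hwpos t ht).ne')
  have hwinvint : IntervalIntegrable (fun t => (w t)⁻¹) volume 0 1 :=
    (huIcc ▸ hwinv).intervalIntegrable
  have hcpos : 0 < c := by
    rw [hc]
    exact intervalIntegral.intervalIntegral_pos_of_pos_on hwinvint
      (fun x hx => inv_pos.2 (hwpos x (Ioo_subset_Icc_self hx))) one_pos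
  have hωnn : 0 ≤ ω := hω ▸ Real.arccos_nonneg _
  constructor
  · -- lower bound
    intro α α' hd hc' hn ha0 ha1
    have hαcont : ContinuousOn α (Icc 0 1) := fun t ht => (hd t ht).continuousWithinAt
    have hg : ∀ t ∈ Icc (0:ℝ) 1,
        HasDerivWithinAt (fun u => ⟪a0, α u⟫) ⟪a0, α' t⟫ (Icc 0 1) t := by
      intro t ht
      simpa using (hasDerivWithinAt_const t _ a0).inner ℝ (hd t ht)
    have horth : ∀ t ∈ Icc (0:ℝ) 1, ⟪α t, α' t⟫ = 0 := by
      intro t ht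
      have h1' : HasDerivWithinAt (fun u => (⟪α u, α u⟫ : ℝ)) (⟪α t, α' t⟫ + ⟪α' t, α t⟫)
          (Icc 0 1) t := (hd t ht).inner ℝ (hd t ht)
      have hone : ∀ u ∈ Icc (0:ℝ) 1, (⟪α u, α u⟫ : ℝ) = 1 := by
        intro u hu
        rw [real_inner_self_eq_norm_mul_norm, hn u hu]; norm_num
      have h2' : HasDerivWithinAt (fun u => (⟪α u, α u⟫ : ℝ)) 0 (Icc 0 1) t :=
        (hasDerivWithinAt_const t _ (1:ℝ)).congr hone (hone t ht)
      have heq := UniqueDiffWithinAt.eq_deriv _ (uniqueDiffOn_Icc_zero_one t ht) h1' h2'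
      have hsymm : ⟪α' t, α t⟫ = ⟪α t, α' t⟫ := real_inner_comm _ _
      rw [hsymm] at heq
      linarith
    have hgle : ∀ t ∈ Icc (0:ℝ) 1, |⟪a0, α t⟫| ≤ 1 := by
      intro t ht
      simpa [h0, hn t ht] using abs_real_inner_le_norm a0 (α t)
    have hkey : ∀ t ∈ Icc (0:ℝ) 1,
        |⟪a0, α' t⟫| ≤ Real.sqrt (1 - ⟪a0, α t⟫^2) * ‖α' t‖ := by
      intro t ht
      have hv : ⟪a0, α' t⟫ = ⟪a0 - ⟪a0, α t⟫ • α t, α' t⟫ := by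
        rw [inner_sub_left, real_inner_smul_left, horth t ht]; ring
      have hns : ‖a0 - ⟪a0, α t⟫ • α t‖^2 = 1 - ⟪a0, α t⟫^2 := by
        rw [norm_sub_sq_real, norm_smul, real_inner_smul_right]
        simp [h0, hn t ht, mul_pow]
        ring
      have hnv : ‖a0 - ⟪a0, α t⟫ • α t‖ = Real.sqrt (1 - ⟪a0, α t⟫^2) := by
        rw [← hns, Real.sqrt_sq (norm_nonneg _)]
      rw [hv]
      calc |⟪a0 - ⟪a0, α t⟫ • α t, α' t⟫| ≤ ‖a0 - ⟪a0, α t⟫ • α t‖ * ‖α' t‖ :=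
            abs_real_inner_le_norm _ _
        _ = Real.sqrt (1 - ⟪a0, α t⟫^2) * ‖α' t‖ := by rw [hnv]
    set L : ℝ := ∫ t in (0:ℝ)..1, ‖α' t‖ with hLdef
    have hnormcont : ContinuousOn (fun t => ‖α' t‖) (Icc (0:ℝ) 1) := hc'.norm
    have hLint : IntervalIntegrable (fun t => ‖α' t‖) volume 0 1 :=
      (huIcc ▸ hnormcont).intervalIntegrable
    have hgcont : ContinuousOn (fun t => ⟪a0, α t⟫) (Icc (0:ℝ) 1) := fun t ht =>
      (hg t ht).continuousWithinAt
    have hg'cont : ContinuousOn (fun t => ⟪a0, α' t⟫) (Icc (0:ℝ) 1) :=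
      continuousOn_const.inner hc'
    have hωL : ω ≤ L := by
      have hεbound : ∀ ε : ℝ, 0 < ε →
          Real.arccos (⟪a0, a1⟫/(1+ε)) - Real.arccos (1/(1+ε)) ≤ L := by
        intro ε hε
        have h1ε : (0:ℝ) < 1 + ε := by linarith
        have hlt : ∀ t ∈ Icc (0:ℝ) 1, |⟪a0, α t⟫/(1+ε)| < 1 := by
          intro t ht
          rw [abs_div, abs_of_pos h1ε, div_lt_one h1ε]
          calc |⟪a0, α t⟫| ≤ 1 := hgle t ht
            _ < 1 + ε := by linarith
        set D : ℝ → ℝ := fun t =>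
          -(1 / Real.sqrt (1 - (⟪a0, α t⟫/(1+ε))^2)) * (⟪a0, α' t⟫ / (1+ε)) with hDdef
        have hpos : ∀ t ∈ Icc (0:ℝ) 1, 0 < 1 - (⟪a0, α t⟫/(1+ε))^2 := by
          intro t ht
          have := hlt t ht
          nlinarith [abs_nonneg (⟪a0, α t⟫/(1+ε)), sq_abs (⟪a0, α t⟫/(1+ε))]
        have hθd : ∀ t ∈ Icc (0:ℝ) 1,
            HasDerivWithinAt (fun u => Real.arccos (⟪a0, α u⟫/(1+ε))) (D t) (Icc 0 1) t := by
          intro t ht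
          have hne1 : ⟪a0, α t⟫/(1+ε) ≠ -1 := by
            intro h; have := hlt t ht; rw [h] at this; simp at this
          have hne2 : ⟪a0, α t⟫/(1+ε) ≠ 1 := by
            intro h; have := hlt t ht; rw [h] at this; simp at this
          have harc := Real.hasDerivAt_arccos hne1 hne2
          have hgd : HasDerivWithinAt (fun u => ⟪a0, α u⟫/(1+ε)) (⟪a0, α' t⟫/(1+ε))
              (Icc 0 1) t := (hg t ht).div_const _
          have := harc.comp_hasDerivWithinAt t hgd; exact this
        have hDabs : ∀ t ∈ Icc (0:ℝ) 1, |D t| ≤ ‖α' t‖ := by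
          intro t ht
          have hp := hpos t ht
          have hsq : 0 < Real.sqrt (1 - (⟪a0, α t⟫/(1+ε))^2) := Real.sqrt_pos.2 hp
          have hcmp : Real.sqrt (1 - ⟪a0, α t⟫^2) ≤
              (1+ε) * Real.sqrt (1 - (⟪a0, α t⟫/(1+ε))^2) := by
            rw [show (1+ε) * Real.sqrt (1 - (⟪a0, α t⟫/(1+ε))^2)
                = Real.sqrt ((1+ε)^2 * (1 - (⟪a0, α t⟫/(1+ε))^2)) by
              rw [Real.sqrt_mul (sq_nonneg _), Real.sqrt_sq h1ε.le]]
            apply Real.sqrt_le_sqrt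
            have : (1+ε)^2 * (1 - (⟪a0, α t⟫/(1+ε))^2) = (1+ε)^2 - ⟪a0, α t⟫^2 := by
              field_simp
            rw [this]
            nlinarith
          rw [hDdef, abs_mul, abs_neg, abs_div, abs_div, abs_of_pos h1ε,
            abs_of_pos hsq, abs_one, div_mul_div_comm, one_mul,
            div_le_iff₀ (by positivity)]
          calc |⟪a0, α' t⟫| ≤ Real.sqrt (1 - ⟪a0, α t⟫^2) * ‖α' t‖ := hkey t ht
            _ ≤ ((1+ε) * Real.sqrt (1 - (⟪a0, α t⟫/(1+ε))^2)) * ‖α' t‖ := by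
                exact mul_le_mul_of_nonneg_right hcmp (norm_nonneg _)
            _ = ‖α' t‖ * (Real.sqrt (1 - (⟪a0, α t⟫/(1+ε))^2) * (1+ε)) := by ring
        have hDcont : ContinuousOn D (Icc (0:ℝ) 1) := by
          apply ContinuousOn.mul
          · apply ContinuousOn.neg
            apply ContinuousOn.div continuousOn_const
            · exact (Real.continuous_sqrt.comp_continuousOn
                (continuousOn_const.sub ((hgcont.div_const _).pow 2)))
            · intro t ht
              exact (Real.sqrt_pos.2 (hpos t ht)).ne'
          · exact hg'cont.div_const _
        have hDint : IntervalIntegrable D volume 0 1 := (huIcc ▸ hDcont).intervalIntegrable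
        have hθcont : ContinuousOn (fun u => Real.arccos (⟪a0, α u⟫/(1+ε))) (Icc (0:ℝ) 1) :=
          fun t ht => (hθd t ht).continuousWithinAt
        have hFTC : ∫ t in (0:ℝ)..1, D t =
            Real.arccos (⟪a0, α 1⟫/(1+ε)) - Real.arccos (⟪a0, α 0⟫/(1+ε)) := by
          apply intervalIntegral.integral_eq_sub_of_hasDeriv_right_of_le zero_le_one hθcont
            ?_ hDint
          intro t ht
          exact (hθd t (Ioo_subset_Icc_self ht)).mono_of_mem_nhdsWithin
            (Icc_mem_nhdsGT_of_mem ⟨ht.1.le, ht.2⟩)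
        have hmono : ∫ t in (0:ℝ)..1, D t ≤ L :=
          intervalIntegral.integral_mono_on zero_le_one hDint hLint
            (fun t ht => (le_abs_self _).trans (hDabs t ht))
        rw [hFTC, ha0, ha1] at hmono
        rw [show (⟪a0, a0⟫ : ℝ) = 1 by rw [real_inner_self_eq_norm_mul_norm, h0]; norm_num]
          at hmono
        exact hmono
      have htends : Filter.Tendsto
          (fun ε : ℝ => Real.arccos (⟪a0, a1⟫/(1+ε)) - Real.arccos (1/(1+ε)))
          (nhdsWithin 0 (Ioi 0)) (nhds ω) := by
        have hF : ContinuousAt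
            (fun ε : ℝ => Real.arccos (⟪a0, a1⟫/(1+ε)) - Real.arccos (1/(1+ε))) 0 := by
          have h1 : ContinuousAt (fun ε : ℝ => 1 + ε) 0 := by fun_prop
          have hne : (1:ℝ) + 0 ≠ 0 := by norm_num
          exact ((Real.continuous_arccos.continuousAt).comp
              (continuousAt_const.div h1 hne)).sub
            ((Real.continuous_arccos.continuousAt).comp
              (continuousAt_const.div h1 hne))
        have := hF.tendsto.mono_left (nhdsWithin_le_nhds : nhdsWithin (0:ℝ) (Ioi 0) ≤ nhds 0)
        simpa [Real.arccos_one, hω] using this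
      exact le_of_tendsto htends
        (eventually_nhdsWithin_of_forall (fun ε hε => hεbound ε hε))
    -- Cauchy-Schwarz
    set K : ℝ := L / c with hKdef
    have hexp : ∀ t ∈ uIcc (0:ℝ) 1,
        (Real.sqrt (w t) * ‖α' t‖ - K / Real.sqrt (w t))^2
          = ‖α' t‖^2 * w t - 2*K*‖α' t‖ + K^2 * (w t)⁻¹ := by
      intro t ht
      rw [huIcc] at ht
      have hwt := hwpos t ht
      set s := Real.sqrt (w t) with hs
      have h1' : s^2 = w t := Real.sq_sqrt hwt.le
      have h2' : s ≠ 0 := (Real.sqrt_pos.2 hwt).ne'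
      rw [← h1']
      field_simp
      ring
    have hnonneg : (0:ℝ) ≤ ∫ t in (0:ℝ)..1,
        (‖α' t‖^2 * w t - 2*K*‖α' t‖ + K^2 * (w t)⁻¹) := by
      rw [← intervalIntegral.integral_congr hexp]
      exact intervalIntegral.integral_nonneg zero_le_one (fun u _ => sq_nonneg _)
    have hI1 : IntervalIntegrable (fun t => ‖α' t‖^2 * w t) volume 0 1 :=
      (huIcc ▸ ((hnormcont.pow 2).mul hw)).intervalIntegrable
    have hI2 : IntervalIntegrable (fun t => 2*K*‖α' t‖) volume 0 1 :=
      (huIcc ▸ (continuousOn_const.mul hnormcont)).intervalIntegrable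
    have hI3 : IntervalIntegrable (fun t => K^2 * (w t)⁻¹) volume 0 1 :=
      (huIcc ▸ (continuousOn_const.mul hwinv)).intervalIntegrable
    rw [intervalIntegral.integral_add (hI1.sub hI2) hI3,
        intervalIntegral.integral_sub hI1 hI2,
        intervalIntegral.integral_const_mul, intervalIntegral.integral_const_mul] at hnonneg
    have hIc : (∫ t in (0:ℝ)..1, (w t)⁻¹) = c := hc.symm
    rw [hIc, ← hLdef] at hnonneg
    have hfin : L^2/c ≤ ∫ t in (0:ℝ)..1, ‖α' t‖^2 * w t := by
      have e1 : K^2 * c = L^2/c := by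
        rw [hKdef]; field_simp
      have e2 : 2*K*L = 2*(L^2/c) := by
        rw [hKdef]; field_simp
      linarith [hnonneg]
    have hsq : ω^2 ≤ L^2 := pow_le_pow_left₀ hωnn hωL 2
    calc ω^2/c ≤ L^2/c := (div_le_div_iff_of_pos_right hcpos).2 hsq
      _ ≤ _ := hfin
  · -- attainment
    by_cases hω0 : ω = 0
    · -- constant case
      have harc0 : Real.arccos ⟪a0, a1⟫ = 0 := by rw [← hω, hω0]
      have hq : ⟪a0, a1⟫ = 1 := le_antisymm hq1 (Real.arccos_eq_zero.mp harc0)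
      have ha01 : a0 = a1 := (inner_eq_one_iff_of_norm_eq_one h0 h1).mp hq
      have hAconst : ∀ s : ℝ, A s = a0 := fun s => by rw [hA, if_pos hω0]
      refine ⟨fun _ => 0, ?_, continuousOn_const, ?_, ?_, ?_, ?_⟩
      · intro t ht
        simp only [hAconst]
        exact hasDerivWithinAt_const t _ a0
      · intro t _; rw [hAconst, h0]
      · rw [hAconst]
      · rw [hAconst, ha01]
      · simp [hω0]
    · -- nontrivial case
      have hqlt : ⟪a0, a1⟫ < 1 :=
        lt_of_le_of_ne hq1 (fun h => hω0 (by rw [hω, h, Real.arccos_one]))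
      have hωpos : 0 < ω := hω ▸ Real.arccos_pos.2 hqlt
      have hωπ : ω < Real.pi := by
        rcases lt_or_eq_of_le (hω ▸ Real.arccos_le_pi ⟪a0, a1⟫) with h | h
        · exact h
        · exfalso
          have := Real.arccos_eq_pi.mp (by rw [← hω]; exact h)
          linarith
      have hsin : 0 < Real.sin ω := Real.sin_pos_of_pos_of_lt_pi hωpos hωπ
      have hcos : Real.cos ω = ⟪a0, a1⟫ := by rw [hω]; exact Real.cos_arccos hgt.le hq1
      have hA' : ∀ s : ℝ, A s = (Real.sin ((1-s)*ω)/Real.sin ω) • a0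
          + (Real.sin (s*ω)/Real.sin ω) • a1 := fun s => by rw [hA, if_neg hω0]
      have hAfun : A = fun s => (Real.sin ((1-s)*ω)/Real.sin ω) • a0
          + (Real.sin (s*ω)/Real.sin ω) • a1 := funext hA'
      set dA : ℝ → EuclideanSpace ℝ (Fin d) := fun s =>
        (Real.cos ((1-s)*ω) * (-1*ω) / Real.sin ω) • a0
          + (Real.cos (s*ω) * ω / Real.sin ω) • a1 with hdAdef
      have hdA : ∀ s : ℝ, HasDerivAt A (dA s) s := by
        intro s
        have hf1 : HasDerivAt (fun u : ℝ => (1-u)*ω) (-1*ω) s :=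
          (((hasDerivAt_id s).const_sub 1).mul_const ω)
        have hs1 : HasDerivAt (fun u : ℝ => Real.sin ((1-u)*ω))
            (Real.cos ((1-s)*ω) * (-1*ω)) s := by have := (Real.hasDerivAt_sin ((1-s)*ω)).comp s hf1; exact this
        have hf2 : HasDerivAt (fun u : ℝ => u*ω) (1*ω) s := (hasDerivAt_id s).mul_const ω
        have hs2 : HasDerivAt (fun u : ℝ => Real.sin (u*ω))
            (Real.cos (s*ω) * (1*ω)) s := by have := (Real.hasDerivAt_sin (s*ω)).comp s hf2; exact this
        have hsum := ((hs1.div_const (Real.sin ω)).smul_const a0).add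
          ((hs2.div_const (Real.sin ω)).smul_const a1)
        rw [hAfun, hdAdef]
        simp only [one_mul] at hsum; exact hsum
      -- the extended weight
      set proj : ℝ → ℝ := fun t => max 0 (min 1 t) with hproj
      have hprojmem : ∀ t : ℝ, proj t ∈ Icc (0:ℝ) 1 := fun t =>
        ⟨le_max_left _ _, max_le zero_le_one (min_le_left _ _)⟩
      have hprojeq : ∀ t ∈ Icc (0:ℝ) 1, proj t = t := by
        intro t ht
        rw [hproj]
        simp only
        rw [min_eq_right ht.2, max_eq_right ht.1]
      set W : ℝ → ℝ := fun t => w (proj t) with hW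
      have hWcont : Continuous W := hw.comp_continuous (by fun_prop) hprojmem
      have hWpos : ∀ t : ℝ, 0 < W t := fun t => hwpos _ (hprojmem t)
      have hWeq : ∀ t ∈ Icc (0:ℝ) 1, W t = w t := fun t ht => by
        rw [hW]; simp only; rw [hprojeq t ht]
      have hWinv : Continuous fun t => (W t)⁻¹ := hWcont.inv₀ (fun t => (hWpos t).ne')
      have hltilde : ∀ t ∈ Icc (0:ℝ) 1, l t = (∫ r in (0:ℝ)..t, (W r)⁻¹) / c := by
        intro t ht
        rw [hl]
        congr 1
        apply intervalIntegral.integral_congr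
        intro r hr
        have hr' : r ∈ Icc (0:ℝ) 1 := by
          rw [uIcc_of_le ht.1] at hr
          exact ⟨hr.1, hr.2.trans ht.2⟩
        simp only
        rw [hWeq r hr']
      have hld : ∀ t ∈ Icc (0:ℝ) 1, HasDerivWithinAt l ((W t)⁻¹ / c) (Icc 0 1) t := by
        intro t ht
        have h1' : HasDerivAt (fun u => ∫ r in (0:ℝ)..u, (W r)⁻¹) ((W t)⁻¹) t :=
          (hWinv.integral_hasStrictDerivAt 0 t).hasDerivAt
        have h2' : HasDerivAt (fun u => (∫ r in (0:ℝ)..u, (W r)⁻¹)/c) ((W t)⁻¹/c) t :=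
          h1'.div_const c
        exact h2'.hasDerivWithinAt.congr (fun u hu => hltilde u hu) (hltilde t ht)
      have hlcont : ContinuousOn l (Icc 0 1) := fun t ht => (hld t ht).continuousWithinAt
      have hnormA : ∀ s : ℝ, ‖A s‖ = 1 := by
        intro s
        apply norm_eq_of_sq _ _ zero_le_one
        rw [hA' s, norm_comb a0 a1 h0 h1, ← hcos]
        have hxy : (1-s)*ω + s*ω = ω := by ring
        have htr := trig1 ((1-s)*ω) (s*ω)
        rw [hxy] at htr
        exact div_comb _ _ _ _ hsin.ne' htr
      have hdAnorm : ∀ s : ℝ, ‖dA s‖ = ω := by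
        intro s
        apply norm_eq_of_sq _ _ hωnn
        rw [hdAdef]
        simp only
        rw [norm_comb a0 a1 h0 h1, ← hcos]
        have hxy : (1-s)*ω + s*ω = ω := by ring
        have htr := trig2 ((1-s)*ω) (s*ω)
        rw [hxy] at htr
        exact div_comb2 _ _ _ _ _ hsin.ne' (by linarith [htr])
      refine ⟨fun t => ((W t)⁻¹ / c) • dA (l t), ?_, ?_, fun t _ => hnormA _, ?_, ?_, ?_⟩
      · intro t ht
        exact HasDerivWithinAt.scomp t ((hdA (l t)).hasDerivWithinAt (s := univ))
          (hld t ht) (mapsTo_univ _ _)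
      · have hdAcont : Continuous dA := by
          rw [hdAdef]
          fun_prop
        exact (((hWinv.continuousOn).div_const c).smul (hdAcont.comp_continuousOn hlcont))
      · have hl0 : l 0 = 0 := by rw [hl]; simp
        rw [hl0, hA']
        norm_num
        rw [div_self hsin.ne']
        simp
      · have hl1 : l 1 = 1 := by rw [hl, ← hc, div_self hcpos.ne']
        rw [hl1, hA']
        norm_num
        rw [div_self hsin.ne']
        simp
      · have hcongr : EqOn (fun t => ‖((W t)⁻¹ / c) • dA (l t)‖^2 * w t)
            (fun t => (ω^2/c^2) * (w t)⁻¹) (uIcc (0:ℝ) 1) := by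
          intro t ht
          rw [huIcc] at ht
          simp only
          rw [norm_smul, hdAnorm]
          have hwt := hwpos t ht
          rw [hWeq t ht, Real.norm_eq_abs,
            abs_of_pos (by positivity : (0:ℝ) < (w t)⁻¹/c)]
          field_simp
        rw [intervalIntegral.integral_congr hcongr,
          intervalIntegral.integral_const_mul, ← hc]
        field_simp
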